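/- arXiv:1507.01614 — 5 statements merged into one kernel-verified Lean document; each statement's English description precedes it below -/
import Mathlib

section
/- Let F be a real n×n matrix and t ∈ ℝ with |t| · ‖F‖ < 1, where ‖F‖ denotes the operator norm of F as a linear map on Euclidean ℝⁿ. Then det(I + tF) > 0 and log det(I + tF) = Σ_{r=1}^∞ ((−1)^{r+1}/r) · tr(F^r) · t^r, where the series on the right converges absolutely. -/
open Matrix

open Matrix Polynomial

namespace LogDetAux


lemma det_list_prod {m : ℕ} (l : List (Matrix (Fin m) (Fin m) ℂ)) :
    l.prod.det = (l.map Matrix.det).prod := by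
  induction l with
  | nil => simp
  | cons a l ih => simp [Matrix.det_mul, ih]

lemma eval_charpoly {m : ℕ} (A : Matrix (Fin m) (Fin m) ℂ) (x : ℂ) :
    (A.charpoly).eval x = (x • (1 : Matrix (Fin m) (Fin m) ℂ) - A).det := by
  rw [Matrix.charpoly, ← Polynomial.coe_evalRingHom, RingHom.map_det]
  congr 1
  ext i j
  by_cases hij : i = j
  · subst hij; simp [charmatrix_apply_eq, Matrix.one_apply]
  · simp [charmatrix_apply_ne _ _ _ hij, Matrix.one_apply, hij]

lemma card_roots_charpoly {n : ℕ} (G : Matrix (Fin n) (Fin n) ℂ) :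
    G.charpoly.roots.card = n := by
  rw [(Polynomial.splits_iff_card_roots).mp (IsAlgClosed.splits _),
    charpoly_natDegree_eq_dim, Fintype.card_fin]

lemma charpoly_eq_prod {n : ℕ} (G : Matrix (Fin n) (Fin n) ℂ) :
    G.charpoly = (G.charpoly.roots.map fun μ => X - C μ).prod :=
  ((IsAlgClosed.splits _).eq_prod_roots_of_monic G.charpoly_monic)

lemma eval_charpoly_prod {n : ℕ} (G : Matrix (Fin n) (Fin n) ℂ) (x : ℂ) :
    (G.charpoly).eval x = (G.charpoly.roots.map fun μ => x - μ).prod := by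
  conv_lhs => rw [charpoly_eq_prod G]
  rw [← Polynomial.coe_evalRingHom, map_multiset_prod, Multiset.map_map]
  simp

/-- swap a list-product of multiset-products -/
lemma prod_swap (l : List ℂ) (M : Multiset ℂ) (f : ℂ → ℂ → ℂ) :
    (l.map fun z => (M.map (f z)).prod).prod
      = (M.map fun μ => (l.map fun z => f z μ).prod).prod := by
  induction l with
  | nil => simp [Multiset.map_const', Multiset.prod_replicate]
  | cons a l ih =>
      simp only [List.map_cons, List.prod_cons, ih, ← Multiset.prod_map_mul]

lemma roots_charpoly_pow {n : ℕ} (G : Matrix (Fin n) (Fin n) ℂ) (k : ℕ) (hk : 0 < k) :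
    (G ^ k).charpoly.roots = G.charpoly.roots.map (· ^ k) := by
  have hcard := card_roots_charpoly G
  set M := G.charpoly.roots with hM
  have hP : (G ^ k).charpoly = (M.map fun μ => X - C (μ ^ k)).prod := by
    apply Polynomial.funext
    intro x
    -- RHS eval
    have hRHS : ((M.map fun μ => X - C (μ ^ k)).prod).eval x
        = (M.map fun μ => x - μ ^ k).prod := by
      rw [← Polynomial.coe_evalRingHom, map_multiset_prod, Multiset.map_map]; simp
    rw [hRHS, eval_charpoly]
    -- the polynomial X^k - C x
    set Q : Polynomial ℂ := X ^ k - C x with hQdef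
    have hQm : Q.Monic := monic_X_pow_sub_C x hk.ne'
    have hQcard : Q.roots.card = k := by
      rw [(Polynomial.splits_iff_card_roots).mp (IsAlgClosed.splits _)]
      exact natDegree_X_pow_sub_C
    have hQ : Q = (Q.roots.map fun z => X - C z).prod :=
      (IsAlgClosed.splits _).eq_prod_roots_of_monic hQm
    set l : List ℂ := Q.roots.toList with hl
    have hlen : l.length = k := by rw [hl, Multiset.length_toList, hQcard]
    have hlcoe : (l : Multiset ℂ) = Q.roots := Multiset.coe_toList _
    -- aeval G Q
    have haeval : G ^ k - x • 1 = (l.map fun z => G - z • 1).prod := by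
      have h1 : Polynomial.aeval G Q = G ^ k - x • 1 := by
        simp [hQdef, Algebra.algebraMap_eq_smul_one]
      have h2 : Q = (l.map fun z => X - C z).prod := by
        rw [hQ, ← hlcoe]; simp
      rw [← h1, h2, map_list_prod, List.map_map]
      congr 1
      exact List.map_congr_left fun z _ => by simp [Algebra.algebraMap_eq_smul_one]
    have hdet : (x • (1 : Matrix (Fin n) (Fin n) ℂ) - G ^ k).det
        = (-1 : ℂ) ^ n * ((l.map fun z => G - z • 1).prod).det := by
      rw [← haeval, ← neg_sub (G ^ k) (x • (1 : Matrix (Fin n) (Fin n) ℂ)), Matrix.det_neg,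
        Fintype.card_fin]
    rw [hdet, det_list_prod, List.map_map]
    have hfac : ∀ z : ℂ, ((G - z • 1).det) = (-1 : ℂ) ^ n * (M.map fun μ => z - μ).prod := by
      intro z
      rw [← neg_sub, Matrix.det_neg, Fintype.card_fin, ← eval_charpoly, eval_charpoly_prod]
    have h3 : (l.map (Matrix.det ∘ fun z => G - z • 1))
        = l.map fun z => (-1 : ℂ) ^ n * (M.map fun μ => z - μ).prod := by
      simp only [Function.comp_def, hfac]
    rw [h3]
    have hconst : (l.map fun z => (-1 : ℂ) ^ n * (M.map fun μ => z - μ).prod).prod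
        = ((-1 : ℂ) ^ n) ^ k * (l.map fun z => (M.map fun μ => z - μ).prod).prod := by
      have : (l.map fun z => (-1 : ℂ) ^ n * (M.map fun μ => z - μ).prod).prod
          = (l.map fun _ => ((-1 : ℂ) ^ n)).prod
            * (l.map fun z => (M.map fun μ => z - μ).prod).prod := by
        rw [← List.prod_map_mul]
      rw [this, List.map_const', List.prod_replicate, hlen]
    rw [hconst, prod_swap]
    -- inner products: ∏_{z∈l} (z - μ) = (-1)^k * (μ^k - x)
    have hinner : ∀ μ : ℂ, (l.map fun z => z - μ).prod = (-1 : ℂ) ^ k * (μ ^ k - x) := by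
      intro μ
      have h4 : (l.map fun z => z - μ).prod = (l.map fun z => -(μ - z)).prod := by
        congr 1; simp only [neg_sub]
      have h5 : (l.map fun z => -(μ - z)).prod
          = (-1 : ℂ) ^ k * (l.map fun z => μ - z).prod := by
        have : (l.map fun z => -(μ - z)) = (l.map fun z => μ - z).map Neg.neg := by
          simp [List.map_map, Function.comp_def]
        rw [this, List.prod_map_neg]
        simp [hlen]
      have h6 : (l.map fun z => μ - z).prod = Q.eval μ := by
        conv_rhs => rw [hQ, ← hlcoe, Multiset.map_coe, Multiset.prod_coe]
        rw [← Polynomial.coe_evalRingHom, map_list_prod, List.map_map]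
        congr 1
        exact (List.map_congr_left fun z _ => by simp).symm
      have h7 : Q.eval μ = μ ^ k - x := by simp [hQdef]
      rw [h4, h5, h6, h7]
    have h8 : (M.map fun μ => (l.map fun z => z - μ).prod).prod
        = (M.map fun μ => (-1 : ℂ) ^ k * (μ ^ k - x)).prod := by
      congr 1; exact Multiset.map_congr rfl fun μ _ => hinner μ
    have h9 : (M.map fun μ => (-1 : ℂ) ^ k * (μ ^ k - x)).prod
        = ((-1 : ℂ) ^ k) ^ n * (M.map fun μ => μ ^ k - x).prod := by
      rw [Multiset.prod_map_mul]
      congr 1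
      simp [Multiset.map_const', Multiset.prod_replicate, hcard]
    have h10 : (M.map fun μ => x - μ ^ k).prod
        = (-1 : ℂ) ^ n * (M.map fun μ => μ ^ k - x).prod := by
      have : (M.map fun μ => x - μ ^ k) = (M.map fun μ => μ ^ k - x).map Neg.neg := by
        rw [Multiset.map_map]; congr 1; funext μ; simp
      rw [this, Multiset.prod_map_neg, Multiset.card_map, hcard]
    rw [h8, h9, h10, ← mul_assoc (((-1 : ℂ) ^ n) ^ k), ← pow_mul, ← pow_mul, mul_comm k n,
      ← pow_add, ← two_mul, pow_mul]
    norm_num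
  have : (Multiset.map (fun μ => X - C (μ ^ k)) M) = (M.map (· ^ k)).map fun a => X - C a := by
    rw [Multiset.map_map]; rfl
  rw [hP, this, Polynomial.roots_multiset_prod_X_sub_C]


open scoped Matrix.Norms.L2Operator in
lemma sq_sum_mulVec_le {n : ℕ} (F : Matrix (Fin n) (Fin n) ℝ) (w : Fin n → ℝ) :
    ∑ i, (F.mulVec w i) ^ 2
      ≤ ‖Matrix.toEuclideanCLM (𝕜 := ℝ) F‖ ^ 2 * ∑ i, (w i) ^ 2 := by
  set wE : EuclideanSpace ℝ (Fin n) := (WithLp.equiv 2 _).symm w with hwE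
  have hb := Matrix.l2_opNorm_mulVec F wE
  rw [Matrix.cstar_norm_def] at hb
  have h1 : ‖(EuclideanSpace.equiv (Fin n) ℝ).symm (F *ᵥ wE)‖ ^ 2
      = ∑ i, (F.mulVec w i) ^ 2 := by
    rw [EuclideanSpace.norm_eq, Real.sq_sqrt (by positivity)]
    simp only [Real.norm_eq_abs, sq_abs, hwE]
    rfl
  have h2 : ‖wE‖ ^ 2 = ∑ i, (w i) ^ 2 := by
    rw [EuclideanSpace.norm_eq, Real.sq_sqrt (by positivity)]
    simp [Real.norm_eq_abs, sq_abs, hwE]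
  calc ∑ i, (F.mulVec w i) ^ 2 = ‖(EuclideanSpace.equiv (Fin n) ℝ).symm (F *ᵥ wE)‖ ^ 2 :=
        h1.symm
    _ ≤ (‖Matrix.toEuclideanCLM (𝕜 := ℝ) F‖ * ‖wE‖) ^ 2 := by
        apply pow_le_pow_left₀ (norm_nonneg _) hb
    _ = ‖Matrix.toEuclideanCLM (𝕜 := ℝ) F‖ ^ 2 * ∑ i, (w i) ^ 2 := by
        rw [mul_pow, h2]

lemma root_bound {n : ℕ} (F : Matrix (Fin n) (Fin n) ℝ) {μ : ℂ}
    (hμ : μ ∈ (F.map Complex.ofReal).charpoly.roots) :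
    ‖μ‖ ≤ ‖Matrix.toEuclideanCLM (𝕜 := ℝ) F‖ := by
  classical
  set G := F.map Complex.ofReal with hG
  set C := ‖Matrix.toEuclideanCLM (𝕜 := ℝ) F‖ with hC
  have hC0 : 0 ≤ C := norm_nonneg _
  have hroot : G.charpoly.eval μ = 0 := (Polynomial.mem_roots'.mp hμ).2
  have hdet : (μ • (1 : Matrix (Fin n) (Fin n) ℂ) - G).det = 0 := by
    rw [← eval_charpoly]; exact hroot
  obtain ⟨v, hv0, hv⟩ := (Matrix.exists_mulVec_eq_zero_iff).mpr hdet
  have hGv : G *ᵥ v = μ • v := by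
    have h := hv
    rw [Matrix.sub_mulVec, Matrix.smul_mulVec, Matrix.one_mulVec, sub_eq_zero] at h
    exact h.symm
  set x : Fin n → ℝ := fun i => (v i).re with hx
  set y : Fin n → ℝ := fun i => (v i).im with hy
  have hre : F.mulVec x = fun i => ((G *ᵥ v) i).re := by
    funext i
    simp [Matrix.mulVec, dotProduct, hG, Matrix.map_apply, Complex.re_sum, Complex.mul_re, hx]
  have him : F.mulVec y = fun i => ((G *ᵥ v) i).im := by
    funext i
    simp [Matrix.mulVec, dotProduct, hG, Matrix.map_apply, Complex.im_sum, Complex.mul_im, hy]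
  set S := ∑ i, Complex.normSq (v i) with hS
  have hSpos : 0 < S := by
    obtain ⟨i, hi⟩ := Function.ne_iff.mp hv0
    exact Finset.sum_pos' (fun j _ => Complex.normSq_nonneg _)
      ⟨i, Finset.mem_univ i, Complex.normSq_pos.mpr hi⟩
  have hkey : Complex.normSq μ * S ≤ C ^ 2 * S := by
    have hL : ∑ i, Complex.normSq ((G *ᵥ v) i) = Complex.normSq μ * S := by
      rw [hGv, hS, Finset.mul_sum]
      congr 1; funext i
      simp [Pi.smul_apply, Complex.normSq_mul, smul_eq_mul]
    have hR : ∑ i, Complex.normSq ((G *ᵥ v) i) = ∑ i, (F.mulVec x i) ^ 2 + ∑ i, (F.mulVec y i) ^ 2 := by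
      rw [← Finset.sum_add_distrib]
      congr 1; funext i
      rw [Complex.normSq_apply, congrFun hre i, congrFun him i]
      ring
    have hxx := sq_sum_mulVec_le F x
    have hyy := sq_sum_mulVec_le F y
    have hSsplit : S = ∑ i, (x i) ^ 2 + ∑ i, (y i) ^ 2 := by
      rw [hS, ← Finset.sum_add_distrib]
      congr 1; funext i
      rw [Complex.normSq_apply]; ring
    calc Complex.normSq μ * S = ∑ i, (F.mulVec x i) ^ 2 + ∑ i, (F.mulVec y i) ^ 2 := by
          rw [← hR, hL]
      _ ≤ C ^ 2 * ∑ i, (x i) ^ 2 + C ^ 2 * ∑ i, (y i) ^ 2 := add_le_add hxx hyy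
      _ = C ^ 2 * S := by rw [hSsplit]; ring
  have hns : Complex.normSq μ ≤ C ^ 2 := le_of_mul_le_mul_right (by linarith [hkey]) hSpos
  rw [Complex.norm_def]
  calc Real.sqrt (Complex.normSq μ) ≤ Real.sqrt (C ^ 2) := Real.sqrt_le_sqrt hns
    _ = C := Real.sqrt_sq hC0

lemma det_one_add_smul_eq_prod {n : ℕ} (G : Matrix (Fin n) (Fin n) ℂ) (s : ℂ) :
    ((1 : Matrix (Fin n) (Fin n) ℂ) + s • G).det
      = (G.charpoly.roots.map fun μ => 1 + s * μ).prod := by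
  rcases eq_or_ne s 0 with rfl | hs
  · simp [Multiset.map_const', Multiset.prod_replicate]
  · have h1 : (1 : Matrix (Fin n) (Fin n) ℂ) + s • G
        = (-s) • ((-s⁻¹) • (1 : Matrix (Fin n) (Fin n) ℂ) - G) := by
      rw [smul_sub, smul_smul]
      have h2 : (-s) * (-s⁻¹) = 1 := by field_simp
      rw [h2, one_smul, neg_smul, sub_neg_eq_add]
    rw [h1, Matrix.det_smul, Fintype.card_fin, ← eval_charpoly, eval_charpoly_prod]
    have hcard := card_roots_charpoly G
    have hpow : (-s) ^ n = (G.charpoly.roots.map fun _ => -s).prod := by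
      simp [Multiset.map_const', Multiset.prod_replicate, hcard]
    rw [hpow, ← Multiset.prod_map_mul]
    congr 1
    apply Multiset.map_congr rfl
    intro μ _
    have : -s⁻¹ - μ = -(s⁻¹ + μ) := by ring
    rw [this, neg_mul_neg, mul_add, mul_inv_cancel₀ hs]





lemma hasSum_multiset {β : Type*} (M : Multiset β) (f : β → ℕ → ℝ) (s : β → ℝ)
    (h : ∀ a ∈ M, HasSum (f a) (s a)) :
    HasSum (fun r => (M.map fun a => f a r).sum) ((M.map s).sum) := by
  revert h
  refine Multiset.induction_on M ?_ ?_
  · intro _; simpa using hasSum_zero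
  · intro a T ih h
    simp only [Multiset.map_cons, Multiset.sum_cons]
    exact (h a (Multiset.mem_cons_self a T)).add
      (ih fun b hb => h b (Multiset.mem_cons_of_mem hb))

lemma log_multiset_prod (M : Multiset ℝ) (h : ∀ x ∈ M, x ≠ 0) :
    Real.log M.prod = (M.map Real.log).sum := by
  revert h
  refine Multiset.induction_on M ?_ ?_
  · intro _; simp
  · intro a T ih h
    have hT : ∀ x ∈ T, x ≠ 0 := fun x hx => h x (Multiset.mem_cons_of_mem hx)
    have hTprod : T.prod ≠ 0 := Multiset.prod_ne_zero fun h0 => hT 0 h0 rfl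
    simp only [Multiset.prod_cons, Multiset.map_cons, Multiset.sum_cons]
    rw [Real.log_mul (h a (Multiset.mem_cons_self a T)) hTprod, ih hT]


end LogDetAux

open LogDetAux Polynomial

/-- The log-determinant trace expansion: for a real `n×n` matrix `F` and `t ∈ ℝ` with
`|t|·‖F‖ < 1` (operator norm on Euclidean space), `det(I + tF) > 0` and
`log det(I + tF) = Σ_{r≥1} ((−1)^(r+1)/r) tr(Fʳ) tʳ`, the series converging absolutely. -/
theorem log_det_trace_expansion {n : ℕ}
    (F : Matrix (Fin n) (Fin n) ℝ) (t : ℝ)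
    (h : |t| * ‖Matrix.toEuclideanCLM (𝕜 := ℝ) F‖ < 1) :
    0 < (1 + t • F).det ∧
    HasSum
      (fun r : ℕ =>
        ((-1 : ℝ) ^ ((r + 1) + 1) / ((r : ℝ) + 1)) * ((F ^ (r + 1)).trace) * t ^ (r + 1))
      (Real.log (1 + t • F).det) ∧
    Summable
      (fun r : ℕ =>
        |((-1 : ℝ) ^ ((r + 1) + 1) / ((r : ℝ) + 1)) * ((F ^ (r + 1)).trace) * t ^ (r + 1)|) := by
  classical
  set C : ℝ := ‖Matrix.toEuclideanCLM (𝕜 := ℝ) F‖ with hCdef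
  have hC0 : 0 ≤ C := norm_nonneg _
  set q : ℝ := |t| * C with hqdef
  have hq1 : q < 1 := h
  have hq0 : 0 ≤ q := mul_nonneg (abs_nonneg t) hC0
  set G : Matrix (Fin n) (Fin n) ℂ := F.map Complex.ofReal with hGdef
  set M : Multiset ℂ := G.charpoly.roots with hMdef
  have hbound : ∀ μ ∈ M, ‖μ‖ ≤ C := fun μ hμ => root_bound F hμ
  -- determinant identity (for every real s)
  have hmapdet : ∀ s : ℝ, (((1 + s • F).det : ℝ) : ℂ)
      = (M.map fun μ => 1 + (s : ℂ) * μ).prod := by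
    intro s
    have hmap : ((1 + s • F).map Complex.ofReal)
        = (1 : Matrix (Fin n) (Fin n) ℂ) + (s : ℂ) • G := by
      ext i j
      by_cases hij : i = j <;>
        simp [Matrix.map_apply, Matrix.add_apply, Matrix.smul_apply, Matrix.one_apply, hij,
          smul_eq_mul, hGdef]
    calc (((1 + s • F).det : ℝ) : ℂ) = ((1 + s • F).map Complex.ofReal).det :=
          RingHom.map_det Complex.ofRealHom _
      _ = (M.map fun μ => 1 + (s : ℂ) * μ).prod := by
          rw [hmap, det_one_add_smul_eq_prod]
  -- factor bound
  have hfac : ∀ s : ℝ, |s| ≤ |t| → ∀ μ ∈ M, ‖(s : ℂ) * μ‖ < 1 := by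
    intro s hs μ hμ
    rw [norm_mul, Complex.norm_real, Real.norm_eq_abs]
    calc |s| * ‖μ‖ ≤ |t| * C :=
          mul_le_mul hs (hbound μ hμ) (norm_nonneg μ) (abs_nonneg t)
      _ < 1 := hq1
  have hfac_ne : ∀ s : ℝ, |s| ≤ |t| → ∀ μ ∈ M, (1 : ℂ) + (s : ℂ) * μ ≠ 0 := by
    intro s hs μ hμ h0
    have h1 : (s : ℂ) * μ = -1 := by linear_combination h0
    have := hfac s hs μ hμ
    rw [h1] at this
    simp at this
  have hdet_ne : ∀ s : ℝ, |s| ≤ |t| → (1 + s • F).det ≠ 0 := by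
    intro s hs hd
    have h2 : (M.map fun μ => 1 + (s : ℂ) * μ).prod = 0 := by
      rw [← hmapdet s, hd, Complex.ofReal_zero]
    obtain ⟨μ, hμ, hμ0⟩ := Multiset.mem_map.mp (Multiset.prod_eq_zero_iff.mp h2)
    exact hfac_ne s hs μ hμ hμ0
  -- positivity
  have hpos : 0 < (1 + t • F).det := by
    by_contra hle
    push_neg at hle
    have hcont : Continuous fun s : ℝ => (1 + s • F).det :=
      (continuous_const.add (continuous_id.smul continuous_const)).matrix_det
    have h01 : (0 : ℝ) ∈ Set.uIcc ((fun s : ℝ => (1 + s • F).det) t)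
        ((fun s : ℝ => (1 + s • F).det) 0) := by
      simp only []
      have : (1 + (0 : ℝ) • F).det = 1 := by simp
      rw [this]
      exact Set.mem_uIcc.mpr (Or.inl ⟨hle, zero_le_one⟩)
    obtain ⟨s, hs, hfs⟩ := intermediate_value_uIcc (hcont.continuousOn) h01
    have habs : |s| ≤ |t| := by
      have e1 := le_abs_self t
      have e2 := neg_abs_le t
      rw [abs_le]
      rcases Set.mem_uIcc.mp hs with ⟨h1, h2⟩ | ⟨h1, h2⟩ <;> constructor <;> linarith
    exact hdet_ne s habs hfs
  -- trace identity
  have htr : ∀ k : ℕ, 0 < k → (((F ^ k).trace : ℝ) : ℂ) = (M.map (· ^ k)).sum := by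
    intro k hk
    have h1 : G ^ k = (F ^ k).map Complex.ofReal := by
      have h2 := map_pow (RingHom.mapMatrix Complex.ofRealHom) F k
      exact h2.symm
    have h3 : ((F ^ k).map Complex.ofReal).trace = (((F ^ k).trace : ℝ) : ℂ) := by
      simp [Matrix.trace, Matrix.diag, Matrix.map_apply]
    rw [← h3, ← h1, ← roots_charpoly_pow G k hk, Matrix.trace_eq_sum_roots_charpoly]
  -- per root HasSum of real parts
  have hμsum : ∀ μ ∈ M, HasSum
      (fun r : ℕ => ((-1 : ℂ) ^ ((r + 1) + 1) * ((t : ℂ) * μ) ^ (r + 1) / (((r:ℕ) + 1 : ℕ) : ℂ)).re)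
      ((Complex.log (1 + (t : ℂ) * μ)).re) := by
    intro μ hμ
    have hz : ‖(t : ℂ) * μ‖ < 1 := by
      exact hfac t le_rfl μ hμ
    have h1 := Complex.hasSum_taylorSeries_log hz
    have h2 : HasSum
        (fun r : ℕ => (-1 : ℂ) ^ ((r + 1) + 1) * ((t : ℂ) * μ) ^ (r + 1) / (((r:ℕ) + 1 : ℕ) : ℂ))
        (Complex.log (1 + (t : ℂ) * μ)) := by
      refine (hasSum_nat_add_iff (f := fun m : ℕ => (-1 : ℂ) ^ (m + 1) * ((t : ℂ) * μ) ^ m / (m : ℂ)) 1).mpr ?_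
      simpa using h1
    exact Complex.hasSum_re h2
  -- the summed HasSum
  have H := hasSum_multiset M
    (fun μ r => ((-1 : ℂ) ^ ((r + 1) + 1) * ((t : ℂ) * μ) ^ (r + 1) / (((r:ℕ) + 1 : ℕ) : ℂ)).re)
    (fun μ => (Complex.log (1 + (t : ℂ) * μ)).re) hμsum
  -- identify the function
  have hfun : ∀ r : ℕ,
      (M.map fun μ => ((-1 : ℂ) ^ ((r + 1) + 1) * ((t : ℂ) * μ) ^ (r + 1) / (((r:ℕ) + 1 : ℕ) : ℂ)).re).sum
        = ((-1 : ℝ) ^ ((r + 1) + 1) / ((r : ℝ) + 1)) * ((F ^ (r + 1)).trace) * t ^ (r + 1) := by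
    intro r
    set c : ℂ := (-1 : ℂ) ^ ((r + 1) + 1) * (t : ℂ) ^ (r + 1) / ((r : ℂ) + 1) with hc
    have h1 : (M.map fun μ => ((-1 : ℂ) ^ ((r + 1) + 1) * ((t : ℂ) * μ) ^ (r + 1) / (((r:ℕ) + 1 : ℕ) : ℂ)).re)
        = M.map fun μ => (c * μ ^ (r + 1)).re := by
      apply Multiset.map_congr rfl
      intro μ _
      congr 1
      rw [hc]
      push_cast
      ring
    have h2 : ((M.map fun μ => c * μ ^ (r + 1)).sum).re
        = (M.map fun μ => (c * μ ^ (r + 1)).re).sum := by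
      have := map_multiset_sum Complex.reAddGroupHom (M.map fun μ => c * μ ^ (r + 1))
      simp only [Multiset.map_map] at this
      exact this
    have h3 : (M.map fun μ => c * μ ^ (r + 1)).sum = c * (M.map (· ^ (r + 1))).sum :=
      Multiset.sum_map_mul_left
    have h4 : c = ((((-1 : ℝ) ^ ((r + 1) + 1) * t ^ (r + 1) / ((r : ℝ) + 1)) : ℝ) : ℂ) := by
      rw [hc]; push_cast; ring
    rw [h1, ← h2, h3, ← htr (r + 1) (Nat.succ_pos r), h4, ← Complex.ofReal_mul,
      Complex.ofReal_re]
    ring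
  -- identify the value
  have hval : (M.map fun μ => (Complex.log (1 + (t : ℂ) * μ)).re).sum
      = Real.log ((1 + t • F).det) := by
    have h1 : (M.map fun μ => (Complex.log (1 + (t : ℂ) * μ)).re)
        = (M.map fun μ => ‖1 + (t : ℂ) * μ‖).map Real.log := by
      rw [Multiset.map_map]
      exact Multiset.map_congr rfl fun μ _ => Complex.log_re _
    have h2 : ∀ x ∈ M.map fun μ => ‖1 + (t : ℂ) * μ‖, x ≠ 0 := by
      intro x hx
      obtain ⟨μ, hμ, rfl⟩ := Multiset.mem_map.mp hx
      exact norm_ne_zero_iff.mpr (hfac_ne t le_rfl μ hμ)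
    have h3 : (M.map fun μ => ‖1 + (t : ℂ) * μ‖).prod
        = ‖(M.map fun μ => 1 + (t : ℂ) * μ).prod‖ := by
      have := map_multiset_prod (normHom (α := ℂ)) (M.map fun μ => 1 + (t : ℂ) * μ)
      rw [Multiset.map_map] at this
      exact this.symm
    rw [h1, ← log_multiset_prod _ h2, h3, ← hmapdet t, Complex.norm_real, Real.norm_eq_abs,
      abs_of_pos hpos]
  refine ⟨hpos, ?_, ?_⟩
  · have H2 := H
    rw [hval] at H2
    convert H2 using 2 with r
    exact (hfun r).symm
  · -- summability
    have hTb : ∀ k : ℕ, 0 < k → |(F ^ k).trace| ≤ (n : ℝ) * C ^ k := by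
      intro k hk
      have h1 : ‖(((F ^ k).trace : ℝ) : ℂ)‖ = |(F ^ k).trace| := by
        rw [Complex.norm_real, Real.norm_eq_abs]
      rw [← h1, htr k hk]
      have h2 := norm_multiset_sum_le (M.map (· ^ k))
      refine h2.trans ?_
      have h3 : ∀ x ∈ (M.map (· ^ k)).map (fun x => ‖x‖), x ≤ C ^ k := by
        intro x hx
        obtain ⟨y, hy, rfl⟩ := Multiset.mem_map.mp hx
        obtain ⟨μ, hμ, rfl⟩ := Multiset.mem_map.mp hy
        rw [norm_pow]
        exact pow_le_pow_left₀ (norm_nonneg μ) (hbound μ hμ) k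
      have h4 := Multiset.sum_le_card_nsmul _ _ h3
      have hMcard : Multiset.card M = n := by rw [hMdef]; exact card_roots_charpoly G
      rw [Multiset.card_map, Multiset.card_map, hMcard, nsmul_eq_mul] at h4
      exact h4
    have hbnd : ∀ r : ℕ,
        |((-1 : ℝ) ^ ((r + 1) + 1) / ((r : ℝ) + 1)) * ((F ^ (r + 1)).trace) * t ^ (r + 1)|
          ≤ ((n : ℝ) * q) * q ^ r := by
      intro r
      rw [abs_mul, abs_mul, abs_div, abs_pow, abs_neg, abs_one, one_pow, abs_pow,
        abs_of_pos (show (0:ℝ) < (r : ℝ) + 1 by positivity)]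
      calc 1 / ((r : ℝ) + 1) * |(F ^ (r + 1)).trace| * |t| ^ (r + 1)
          ≤ 1 * ((n : ℝ) * C ^ (r + 1)) * |t| ^ (r + 1) := by
            gcongr
            · exact div_le_one_of_le₀ (by push_cast; linarith [Nat.cast_nonneg (α := ℝ) r]) (by positivity)
            · exact hTb (r + 1) (Nat.succ_pos r)
      _ = ((n : ℝ) * q) * q ^ r := by
            rw [hqdef, one_mul, mul_pow]
            ring
    exact Summable.of_nonneg_of_le (fun r => abs_nonneg _) hbnd
      ((summable_geometric_of_lt_one hq0 hq1).mul_left _)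
end

section
/- Let n ∈ ℕ, let w_1, …, w_n ≥ 0 and Z_1, …, Z_n > 0 be real numbers, let λ > 0, let c ∈ (0,1), let s ∈ ℕ, and let m₁, m₂ be indices with 0 ≤ m₁ < m₂ ≤ n+1 such that λZ_i < c for all i ≤ m₁ and λZ_i > c⁻¹ for all i ≥ m₂. Define f(λ) = Σ_{i=1}^n w_i · λZ_i/(1 + λZ_i), S_r = Σ_{j=1}^{m₁} w_j Z_j^r, and T_r = Σ_{j=m₂}^{n} w_j Z_j^{−r}. Then there exists E ∈ ℝ with |E| ≤ c^{s+1} Σ_{i=1}^n w_i such that f(λ) = Σ_{i=m₁+1}^{m₂−1} w_i · λZ_i/(1 + λZ_i) + Σ_{r=1}^{s} (−1)^{r+1} λ^r S_r + Σ_{r=0}^{s} (−1)^r λ^{−r} T_r + E. -/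
open Finset

lemma expandA (x : ℝ) (hx : 0 < x) (s : ℕ) :
    x / (1 + x) = (∑ r ∈ Icc 1 s, (-1:ℝ)^(r+1) * x^r) + (-1:ℝ)^s * x^(s+1) / (1+x) := by
  have h1 : (0:ℝ) < 1 + x := by linarith
  induction s with
  | zero => simp
  | succ s ih =>
    rw [Finset.sum_Icc_succ_top (by omega : 1 ≤ s+1), ih]
    field_simp
    ring

lemma expandB (x : ℝ) (hx : 0 < x) (s : ℕ) :
    x / (1 + x) = (∑ r ∈ Icc 0 s, (-1:ℝ)^r * (x^r)⁻¹) + (-1:ℝ)^(s+1) * (x^s)⁻¹ / (1+x) := by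
  have h1 : (0:ℝ) < 1 + x := by linarith
  induction s with
  | zero =>
    simp only [Icc_self, sum_singleton, pow_zero, pow_one, inv_one, mul_one, one_mul]
    field_simp
    ring
  | succ s ih =>
    rw [Finset.sum_Icc_succ_top (Nat.zero_le _), ih]
    field_simp
    ring

/-- First Appendix lemma of the paper: expansion of
`f(λ) = Σᵢ wᵢ λZᵢ/(1+λZᵢ)` in powers of `λ` (over indices with `λZᵢ < c`) and
`λ⁻¹` (over indices with `λZᵢ > c⁻¹`), with error bound `|E| ≤ c^(s+1) Σᵢ wᵢ`. -/
theorem f_expansion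
    (n : ℕ) (w Z : ℕ → ℝ)
    (hw : ∀ i ∈ Icc 1 n, 0 ≤ w i) (hZ : ∀ i ∈ Icc 1 n, 0 < Z i)
    (lam : ℝ) (hlam : 0 < lam)
    (c : ℝ) (hc0 : 0 < c) (hc1 : c < 1)
    (s : ℕ)
    (m₁ m₂ : ℕ) (hm : m₁ < m₂) (hm₂ : m₂ ≤ n + 1)
    (hsmall : ∀ i, 1 ≤ i → i ≤ m₁ → lam * Z i < c)
    (hlarge : ∀ i, m₂ ≤ i → i ≤ n → lam * Z i > c⁻¹)
    (f : ℝ) (hf : f = ∑ i ∈ Icc 1 n, w i * (lam * Z i) / (1 + lam * Z i))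
    (S T : ℕ → ℝ)
    (hS : ∀ r, S r = ∑ j ∈ Icc 1 m₁, w j * Z j ^ r)
    (hT : ∀ r, T r = ∑ j ∈ Icc m₂ n, w j * (Z j ^ r)⁻¹) :
    ∃ E : ℝ, |E| ≤ c ^ (s + 1) * ∑ i ∈ Icc 1 n, w i ∧
      f = (∑ i ∈ Icc (m₁ + 1) (m₂ - 1), w i * (lam * Z i) / (1 + lam * Z i))
          + (∑ r ∈ Icc 1 s, (-1 : ℝ) ^ (r + 1) * lam ^ r * S r)
          + (∑ r ∈ Icc 0 s, (-1 : ℝ) ^ r * (lam ^ r)⁻¹ * T r)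
          + E := by
  have hm₁n : m₁ ≤ n := by omega
  have h1m₂ : 1 ≤ m₂ := by omega
  -- membership facts
  have hmemA : ∀ i ∈ Icc 1 m₁, i ∈ Icc 1 n := by
    intro i hi; rw [mem_Icc] at hi ⊢; omega
  have hmemB : ∀ i ∈ Icc m₂ n, i ∈ Icc 1 n := by
    intro i hi; rw [mem_Icc] at hi ⊢; omega
  -- error terms
  set E₁ : ℝ := ∑ i ∈ Icc 1 m₁,
      w i * ((-1:ℝ)^s * (lam * Z i)^(s+1) / (1 + lam * Z i)) with hE₁
  set E₂ : ℝ := ∑ i ∈ Icc m₂ n,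
      w i * ((-1:ℝ)^(s+1) * ((lam * Z i)^s)⁻¹ / (1 + lam * Z i)) with hE₂
  refine ⟨E₁ + E₂, ?_, ?_⟩
  · -- error bound
    have hbA : ∀ i ∈ Icc 1 m₁,
        |w i * ((-1:ℝ)^s * (lam * Z i)^(s+1) / (1 + lam * Z i))| ≤ w i * c^(s+1) := by
      intro i hi
      have hi' := hmemA i hi
      have hwi := hw i hi'
      have hZi := hZ i hi'
      have hx : 0 < lam * Z i := mul_pos hlam hZi
      have hxc : lam * Z i < c := hsmall i (mem_Icc.mp hi).1 (mem_Icc.mp hi).2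
      have heq : w i * ((-1:ℝ)^s * (lam * Z i)^(s+1) / (1 + lam * Z i))
          = (-1:ℝ)^s * (w i * ((lam * Z i)^(s+1) / (1 + lam * Z i))) := by ring
      rw [heq, abs_mul, abs_pow, abs_neg, abs_one, one_pow, one_mul,
        abs_of_nonneg (by positivity)]
      have h1 : (lam * Z i)^(s+1) / (1 + lam * Z i) ≤ (lam * Z i)^(s+1) :=
        div_le_self (by positivity) (by linarith)
      have h2 : (lam * Z i)^(s+1) ≤ c^(s+1) :=
        pow_le_pow_left₀ (le_of_lt hx) (le_of_lt hxc) _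
      exact mul_le_mul_of_nonneg_left (by linarith) hwi
    have hbB : ∀ i ∈ Icc m₂ n,
        |w i * ((-1:ℝ)^(s+1) * ((lam * Z i)^s)⁻¹ / (1 + lam * Z i))| ≤ w i * c^(s+1) := by
      intro i hi
      have hi' := hmemB i hi
      have hwi := hw i hi'
      have hZi := hZ i hi'
      have hx : 0 < lam * Z i := mul_pos hlam hZi
      have hxc : c⁻¹ < lam * Z i := hlarge i (mem_Icc.mp hi).1 (mem_Icc.mp hi).2
      have heq : w i * ((-1:ℝ)^(s+1) * ((lam * Z i)^s)⁻¹ / (1 + lam * Z i))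
          = (-1:ℝ)^(s+1) * (w i * (((lam * Z i)^s)⁻¹ / (1 + lam * Z i))) := by ring
      rw [heq, abs_mul, abs_pow, abs_neg, abs_one, one_pow, one_mul,
        abs_of_nonneg (by positivity)]
      have hkey : (c^(s+1))⁻¹ ≤ (lam * Z i)^s * (1 + lam * Z i) := by
        have h1 : (c⁻¹)^(s+1) ≤ (lam * Z i)^(s+1) :=
          pow_le_pow_left₀ (by positivity) (le_of_lt hxc) _
        have h2 : (lam * Z i)^(s+1) ≤ (lam * Z i)^s * (1 + lam * Z i) := by
          rw [pow_succ]
          exact mul_le_mul_of_nonneg_left (by linarith) (by positivity)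
        rw [← inv_pow]
        linarith
      have hpos : (0:ℝ) < (c^(s+1))⁻¹ := by positivity
      have h3 := inv_anti₀ hpos hkey
      rw [inv_inv] at h3
      have h4 : ((lam * Z i)^s)⁻¹ / (1 + lam * Z i)
          = ((lam * Z i)^s * (1 + lam * Z i))⁻¹ := by
        rw [div_eq_mul_inv, mul_inv]
      rw [h4]
      exact mul_le_mul_of_nonneg_left h3 hwi
    have hA : |E₁| ≤ ∑ i ∈ Icc 1 m₁, w i * c^(s+1) :=
      (Finset.abs_sum_le_sum_abs _ _).trans (Finset.sum_le_sum hbA)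
    have hB : |E₂| ≤ ∑ i ∈ Icc m₂ n, w i * c^(s+1) :=
      (Finset.abs_sum_le_sum_abs _ _).trans (Finset.sum_le_sum hbB)
    have hdisj : Disjoint (Icc 1 m₁) (Icc m₂ n) := by
      rw [Finset.disjoint_left]
      intro a ha hb
      rw [mem_Icc] at ha hb
      omega
    have hsub : Icc 1 m₁ ∪ Icc m₂ n ⊆ Icc 1 n := by
      intro i hi
      rcases Finset.mem_union.mp hi with h | h
      · exact hmemA i h
      · exact hmemB i h
    have hsum : (∑ i ∈ Icc 1 m₁, w i * c^(s+1)) + (∑ i ∈ Icc m₂ n, w i * c^(s+1))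
        ≤ ∑ i ∈ Icc 1 n, w i * c^(s+1) := by
      rw [← Finset.sum_union hdisj]
      refine Finset.sum_le_sum_of_subset_of_nonneg hsub ?_
      intro i hi _
      exact mul_nonneg (hw i hi) (by positivity)
    have hfin : (∑ i ∈ Icc 1 n, w i * c^(s+1)) = c^(s+1) * ∑ i ∈ Icc 1 n, w i := by
      rw [← Finset.sum_mul, mul_comm]
    calc |E₁ + E₂| ≤ |E₁| + |E₂| := abs_add_le _ _
      _ ≤ (∑ i ∈ Icc 1 m₁, w i * c^(s+1)) + (∑ i ∈ Icc m₂ n, w i * c^(s+1)) := by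
          linarith
      _ ≤ c^(s+1) * ∑ i ∈ Icc 1 n, w i := by rw [← hfin] at *; linarith [hsum]
  · -- expansion identity
    have hsplit : ∑ i ∈ Icc 1 n, w i * (lam * Z i) / (1 + lam * Z i)
        = (∑ i ∈ Icc 1 m₁, w i * (lam * Z i) / (1 + lam * Z i))
        + (∑ i ∈ Icc (m₁+1) (m₂-1), w i * (lam * Z i) / (1 + lam * Z i))
        + (∑ i ∈ Icc m₂ n, w i * (lam * Z i) / (1 + lam * Z i)) := by
      have h1 : Icc 1 m₁ = Ioc 0 m₁ := Finset.Icc_add_one_left_eq_Ioc 0 m₁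
      have h2 : Icc (m₁+1) (m₂-1) = Ioc m₁ (m₂-1) := Finset.Icc_add_one_left_eq_Ioc m₁ (m₂-1)
      have h3 : Icc m₂ n = Ioc (m₂-1) n := by
        have h : m₂ - 1 + 1 = m₂ := by omega
        have := Finset.Icc_add_one_left_eq_Ioc (m₂-1) n
        rw [h] at this
        exact this
      have h0 : Icc 1 n = Ioc 0 n := Finset.Icc_add_one_left_eq_Ioc 0 n
      rw [h0, h1, h2, h3,
        ← Finset.sum_Ioc_consecutive _ (by omega : (0:ℕ) ≤ m₂ - 1) (by omega : m₂ - 1 ≤ n),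
        ← Finset.sum_Ioc_consecutive _ (by omega : (0:ℕ) ≤ m₁) (by omega : m₁ ≤ m₂ - 1)]
    have hAeq : ∑ i ∈ Icc 1 m₁, w i * (lam * Z i) / (1 + lam * Z i)
        = (∑ r ∈ Icc 1 s, (-1:ℝ)^(r+1) * lam^r * S r) + E₁ := by
      have step : ∀ i ∈ Icc 1 m₁, w i * (lam * Z i) / (1 + lam * Z i)
          = (∑ r ∈ Icc 1 s, w i * ((-1:ℝ)^(r+1) * (lam * Z i)^r))
            + w i * ((-1:ℝ)^s * (lam * Z i)^(s+1) / (1 + lam * Z i)) := by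
        intro i hi
        have hZi := hZ i (hmemA i hi)
        have hx : 0 < lam * Z i := mul_pos hlam hZi
        rw [mul_div_assoc, expandA (lam * Z i) hx s, mul_add, mul_sum]
      rw [Finset.sum_congr rfl step, Finset.sum_add_distrib, Finset.sum_comm]
      congr 1
      refine Finset.sum_congr rfl ?_
      intro r _
      rw [hS r, mul_sum]
      refine Finset.sum_congr rfl ?_
      intro i _
      rw [mul_pow]
      ring
    have hBeq : ∑ i ∈ Icc m₂ n, w i * (lam * Z i) / (1 + lam * Z i)
        = (∑ r ∈ Icc 0 s, (-1:ℝ)^r * (lam^r)⁻¹ * T r) + E₂ := by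
      have step : ∀ i ∈ Icc m₂ n, w i * (lam * Z i) / (1 + lam * Z i)
          = (∑ r ∈ Icc 0 s, w i * ((-1:ℝ)^r * ((lam * Z i)^r)⁻¹))
            + w i * ((-1:ℝ)^(s+1) * ((lam * Z i)^s)⁻¹ / (1 + lam * Z i)) := by
        intro i hi
        have hZi := hZ i (hmemB i hi)
        have hx : 0 < lam * Z i := mul_pos hlam hZi
        rw [mul_div_assoc, expandB (lam * Z i) hx s, mul_add, mul_sum]
      rw [Finset.sum_congr rfl step, Finset.sum_add_distrib, Finset.sum_comm]
      congr 1
      refine Finset.sum_congr rfl ?_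
      intro r _
      rw [hT r, mul_sum]
      refine Finset.sum_congr rfl ?_
      intro i _
      rw [mul_pow, mul_inv]
      ring
    rw [hf, hsplit, hAeq, hBeq]
    ring
end

section
/- Let n ∈ ℕ, let a_1, …, a_n > 0 and Z_1, …, Z_n > 0 be real numbers, let λ > 0, let c ∈ (0,1), let s ∈ ℕ with s ≥ 1, and let m₁, m₂ be indices with 0 ≤ m₁ < m₂ ≤ n+1 such that λZ_i < c for all i ≤ m₁ and λZ_i > c⁻¹ for all i ≥ m₂. Define g(λ) = Σ_{i=1}^n log a_i + Σ_{i=1}^n log(1 + λZ_i), a = Σ_{i=1}^n log a_i, b = Σ_{j=m₂}^{n} log Z_j, U_r = Σ_{j=1}^{m₁} Z_j^r, and V_r = Σ_{j=m₂}^{n} Z_j^{−r}. Then there exists E ∈ ℝ with |E| ≤ n · c^{s+1} such that g(λ) = a + b + (n − m₂ + 1)·log λ + Σ_{i=m₁+1}^{m₂−1} log(1 + λZ_i) + Σ_{r=1}^{s} ((−1)^{r−1}/r) λ^r U_r + Σ_{r=1}^{s} ((−1)^{r−1}/r) λ^{−r} V_r + E. -/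
open Finset

lemma log_taylor_bound (s : ℕ) (x : ℝ) (hx0 : 0 ≤ x) (hx1 : x < 1) :
    |Real.log (1 + x) - ∑ r ∈ Icc 1 s, ((-1 : ℝ) ^ (r - 1) / (r : ℝ)) * x ^ r| ≤ x ^ (s + 1) := by
  set f : ℝ → ℝ := fun t => Real.log (1 + t) - ∑ r ∈ Icc 1 s, ((-1 : ℝ) ^ (r - 1) / (r : ℝ)) * t ^ r with hf
  set f' : ℝ → ℝ := fun t => (-t) ^ s / (1 + t) with hf'
  have key : ∀ t ∈ Set.Icc (0:ℝ) x, HasDerivWithinAt f (f' t) (Set.Icc 0 x) t := by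
    intro t ht
    have ht0 : (0:ℝ) ≤ t := ht.1
    have h1t : (0:ℝ) < 1 + t := by linarith
    have hlog : HasDerivAt (fun t : ℝ => Real.log (1 + t)) (1 / (1 + t)) t := by
      have := (Real.hasDerivAt_log (ne_of_gt h1t)).comp t ((hasDerivAt_id t).const_add 1)
      simpa [Function.comp_def] using this
    have hsum : HasDerivAt (fun t : ℝ => ∑ r ∈ Icc 1 s, ((-1 : ℝ) ^ (r - 1) / (r : ℝ)) * t ^ r)
        (∑ r ∈ Icc 1 s, (-1 : ℝ) ^ (r - 1) * t ^ (r - 1)) t := by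
      have : HasDerivAt (fun t : ℝ => ∑ r ∈ Icc 1 s, ((-1 : ℝ) ^ (r - 1) / (r : ℝ)) * t ^ r)
          (∑ r ∈ Icc 1 s, ((-1 : ℝ) ^ (r - 1) / (r : ℝ)) * ((r : ℝ) * t ^ (r - 1))) t := by
        apply HasDerivAt.fun_sum
        intro r hr
        exact (hasDerivAt_pow r t).const_mul _
      convert this using 1
      refine Finset.sum_congr rfl fun r hr => ?_
      have hr1 : 1 ≤ r := (Finset.mem_Icc.mp hr).1
      have : (r : ℝ) ≠ 0 := Nat.cast_ne_zero.mpr (by omega)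
      field_simp
    have : HasDerivAt f (1 / (1 + t) - ∑ r ∈ Icc 1 s, (-1 : ℝ) ^ (r - 1) * t ^ (r - 1)) t :=
      hlog.sub hsum
    have heq : 1 / (1 + t) - ∑ r ∈ Icc 1 s, (-1 : ℝ) ^ (r - 1) * t ^ (r - 1) = f' t := by
      have hre : ∑ r ∈ Icc 1 s, (-1 : ℝ) ^ (r - 1) * t ^ (r - 1)
          = ∑ k ∈ range s, (-t) ^ k := by
        rw [show Icc 1 s = Ico 1 (s+1) by rfl, Finset.sum_Ico_eq_sum_range]
        refine Finset.sum_congr rfl fun k hk => ?_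
        rw [Nat.add_sub_cancel_left, neg_pow t k]
      have hmul : (1 + t) * (∑ k ∈ range s, (-t)^k) = 1 - (-1)^s * t^s := by
        have h := geom_sum_mul (-t : ℝ) s
        rw [neg_pow t s] at h
        linear_combination -h
      have hne : (1 + t) ≠ 0 := ne_of_gt h1t
      rw [hre, hf']
      field_simp
      linear_combination -hmul
    exact (heq ▸ this).hasDerivWithinAt
  have bound : ∀ t ∈ Set.Icc (0:ℝ) x, ‖f' t‖ ≤ x ^ s := by
    intro t ht
    have ht0 : (0:ℝ) ≤ t := ht.1
    have h1t : (1:ℝ) ≤ 1 + t := by linarith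
    have : |f' t| = t ^ s / (1 + t) := by
      rw [hf', abs_div, abs_pow, abs_neg, abs_of_nonneg ht0, abs_of_nonneg (by linarith)]
    rw [Real.norm_eq_abs, this]
    calc t ^ s / (1 + t) ≤ t ^ s / 1 := by
          apply div_le_div_of_nonneg_left (pow_nonneg ht0 s) one_pos h1t
      _ = t ^ s := by ring
      _ ≤ x ^ s := pow_le_pow_left₀ ht0 ht.2 s
  have := Convex.norm_image_sub_le_of_norm_hasDerivWithin_le key bound (convex_Icc 0 x)
    (Set.left_mem_Icc.mpr hx0) (Set.right_mem_Icc.mpr hx0)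
  have hf0 : f 0 = 0 := by
    simp only [hf]
    rw [add_zero, Real.log_one]
    rw [Finset.sum_eq_zero, sub_zero]
    intro r hr
    have hr1 : 1 ≤ r := (Finset.mem_Icc.mp hr).1
    rw [zero_pow (by omega), mul_zero]
  rw [hf0, sub_zero, sub_zero, Real.norm_eq_abs, Real.norm_eq_abs, abs_of_nonneg hx0] at this
  calc |f x| ≤ x ^ s * x := this
    _ = x ^ (s+1) := by ring

/-- Second Appendix lemma of the paper: expansion of
`g(λ) = Σᵢ log aᵢ + Σᵢ log(1+λZᵢ)` in `log λ` and in powers of `λ` (over indices with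
`λZᵢ < c`) and `λ⁻¹` (over indices with `λZᵢ > c⁻¹`), with error bound `|E| ≤ n c^(s+1)`. -/
theorem g_expansion
    (n : ℕ) (a Z : ℕ → ℝ)
    (ha : ∀ i ∈ Icc 1 n, 0 < a i) (hZ : ∀ i ∈ Icc 1 n, 0 < Z i)
    (lam : ℝ) (hlam : 0 < lam)
    (c : ℝ) (hc0 : 0 < c) (hc1 : c < 1)
    (s : ℕ) (hs : 1 ≤ s)
    (m₁ m₂ : ℕ) (hm : m₁ < m₂) (hm₂ : m₂ ≤ n + 1)
    (hsmall : ∀ i, 1 ≤ i → i ≤ m₁ → lam * Z i < c)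
    (hlarge : ∀ i, m₂ ≤ i → i ≤ n → lam * Z i > c⁻¹)
    (g : ℝ)
    (hg : g = (∑ i ∈ Icc 1 n, Real.log (a i)) + ∑ i ∈ Icc 1 n, Real.log (1 + lam * Z i))
    (A b : ℝ)
    (hA : A = ∑ i ∈ Icc 1 n, Real.log (a i))
    (hb : b = ∑ j ∈ Icc m₂ n, Real.log (Z j))
    (U V : ℕ → ℝ)
    (hU : ∀ r, U r = ∑ j ∈ Icc 1 m₁, Z j ^ r)
    (hV : ∀ r, V r = ∑ j ∈ Icc m₂ n, (Z j ^ r)⁻¹) :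
    ∃ E : ℝ, |E| ≤ (n : ℝ) * c ^ (s + 1) ∧
      g = A + b + ((n : ℝ) - (m₂ : ℝ) + 1) * Real.log lam
          + (∑ i ∈ Icc (m₁ + 1) (m₂ - 1), Real.log (1 + lam * Z i))
          + (∑ r ∈ Icc 1 s, ((-1 : ℝ) ^ (r - 1) / (r : ℝ)) * lam ^ r * U r)
          + (∑ r ∈ Icc 1 s, ((-1 : ℝ) ^ (r - 1) / (r : ℝ)) * (lam ^ r)⁻¹ * V r)
          + E := by
  have hm₁n : m₁ ≤ n := by omega
  have hm₂1 : 1 ≤ m₂ := by omega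
  have hm₁m : m₁ ≤ m₂ - 1 := by omega
  have hm'n : m₂ - 1 ≤ n := by omega
  have hcpos : (0:ℝ) < c ^ (s+1) := pow_pos hc0 _
  set T : ℝ → ℝ := fun x => ∑ r ∈ Icc 1 s, ((-1 : ℝ) ^ (r - 1) / (r : ℝ)) * x ^ r with hT
  set E₁ : ℝ := ∑ i ∈ Ioc 0 m₁, (Real.log (1 + lam * Z i) - T (lam * Z i)) with hE₁
  set E₂ : ℝ := ∑ i ∈ Ioc (m₂ - 1) n,
      (Real.log (1 + (lam * Z i)⁻¹) - T ((lam * Z i)⁻¹)) with hE₂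
  have hset2 : Icc m₂ n = Ioc (m₂ - 1) n := by
    rw [← Finset.Icc_add_one_left_eq_Ioc]
    congr 1
    omega
  have hset1 : Icc 1 m₁ = Ioc 0 m₁ := by rw [← Finset.Icc_add_one_left_eq_Ioc, zero_add]
  have hZipos : ∀ i ∈ Ioc 0 m₁, 0 < Z i := by
    intro i hi
    rw [mem_Ioc] at hi
    exact hZ i (mem_Icc.mpr ⟨by omega, by omega⟩)
  have hZipos' : ∀ i ∈ Ioc (m₂ - 1) n, 0 < Z i := by
    intro i hi
    rw [mem_Ioc] at hi
    exact hZ i (mem_Icc.mpr ⟨by omega, by omega⟩)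
  have hZpos : ∀ i ∈ Ioc 0 m₁, 0 < lam * Z i :=
    fun i hi => mul_pos hlam (hZipos i hi)
  have hZpos' : ∀ i ∈ Ioc (m₂ - 1) n, 0 < lam * Z i :=
    fun i hi => mul_pos hlam (hZipos' i hi)
  have hEb₁ : ∀ i ∈ Ioc 0 m₁, |Real.log (1 + lam * Z i) - T (lam * Z i)| ≤ c ^ (s+1) := by
    intro i hi
    have hp := hZpos i hi
    rw [mem_Ioc] at hi
    have hxc : lam * Z i < c := hsmall i (by omega) hi.2
    calc |Real.log (1 + lam * Z i) - T (lam * Z i)| ≤ (lam * Z i) ^ (s+1) :=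
          log_taylor_bound s _ hp.le (lt_trans hxc hc1)
      _ ≤ c ^ (s+1) := pow_le_pow_left₀ hp.le hxc.le _
  have hinvc : ∀ i ∈ Ioc (m₂ - 1) n, (lam * Z i)⁻¹ < c := by
    intro i hi
    have hp := hZpos' i hi
    rw [mem_Ioc] at hi
    have hgt : c⁻¹ < lam * Z i := hlarge i (by omega) hi.2
    rw [← inv_inv c]
    exact inv_strictAnti₀ (inv_pos.mpr hc0) hgt
  have hEb₂ : ∀ i ∈ Ioc (m₂ - 1) n,
      |Real.log (1 + (lam * Z i)⁻¹) - T ((lam * Z i)⁻¹)| ≤ c ^ (s+1) := by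
    intro i hi
    have hp := hZpos' i hi
    have hxc := hinvc i hi
    calc |Real.log (1 + (lam * Z i)⁻¹) - T ((lam * Z i)⁻¹)| ≤ ((lam * Z i)⁻¹) ^ (s+1) :=
          log_taylor_bound s _ (inv_nonneg.mpr hp.le) (lt_trans hxc hc1)
      _ ≤ c ^ (s+1) := pow_le_pow_left₀ (inv_nonneg.mpr hp.le) hxc.le _
  have hcardR : ((n - (m₂ - 1) : ℕ) : ℝ) = (n:ℝ) - (m₂:ℝ) + 1 := by
    rw [Nat.cast_sub hm'n, Nat.cast_sub hm₂1, Nat.cast_one]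
    ring
  refine ⟨E₁ + E₂, ?_, ?_⟩
  · have h1 : |E₁| ≤ (m₁ : ℝ) * c ^ (s+1) := by
      calc |E₁| ≤ ∑ i ∈ Ioc 0 m₁, |Real.log (1 + lam * Z i) - T (lam * Z i)| :=
            Finset.abs_sum_le_sum_abs _ _
        _ ≤ ∑ _i ∈ Ioc 0 m₁, c ^ (s+1) := Finset.sum_le_sum hEb₁
        _ = (m₁ : ℝ) * c ^ (s+1) := by
            rw [Finset.sum_const, Nat.card_Ioc, nsmul_eq_mul]
            simp
    have h2 : |E₂| ≤ ((n - (m₂ - 1) : ℕ) : ℝ) * c ^ (s+1) := by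
      calc |E₂| ≤ ∑ i ∈ Ioc (m₂-1) n, |Real.log (1 + (lam * Z i)⁻¹) - T ((lam * Z i)⁻¹)| :=
            Finset.abs_sum_le_sum_abs _ _
        _ ≤ ∑ _i ∈ Ioc (m₂-1) n, c ^ (s+1) := Finset.sum_le_sum hEb₂
        _ = _ := by rw [Finset.sum_const, Nat.card_Ioc, nsmul_eq_mul]
    have hcount : (m₁ : ℝ) + ((n - (m₂ - 1) : ℕ) : ℝ) ≤ (n : ℝ) := by
      have : m₁ + (n - (m₂ - 1)) ≤ n := by omega
      exact_mod_cast this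
    calc |E₁ + E₂| ≤ |E₁| + |E₂| := abs_add_le _ _
      _ ≤ (m₁ : ℝ) * c ^ (s+1) + ((n - (m₂ - 1) : ℕ) : ℝ) * c ^ (s+1) := add_le_add h1 h2
      _ = ((m₁ : ℝ) + ((n - (m₂ - 1) : ℕ) : ℝ)) * c ^ (s+1) := by ring
      _ ≤ (n : ℝ) * c ^ (s+1) := mul_le_mul_of_nonneg_right hcount hcpos.le
  · have hsplit : ∑ i ∈ Icc 1 n, Real.log (1 + lam * Z i)
        = (∑ i ∈ Ioc 0 m₁, Real.log (1 + lam * Z i))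
          + (∑ i ∈ Ioc m₁ (m₂ - 1), Real.log (1 + lam * Z i))
          + (∑ i ∈ Ioc (m₂ - 1) n, Real.log (1 + lam * Z i)) := by
      rw [show Icc 1 n = Ioc 0 n from by rw [← Finset.Icc_add_one_left_eq_Ioc, zero_add],
        ← Finset.sum_Ioc_consecutive _ (Nat.zero_le m₁) hm₁n,
        ← Finset.sum_Ioc_consecutive _ hm₁m hm'n]
      ring
    have hS1 : ∑ i ∈ Ioc 0 m₁, Real.log (1 + lam * Z i)
        = (∑ r ∈ Icc 1 s, ((-1 : ℝ) ^ (r - 1) / (r : ℝ)) * lam ^ r * U r) + E₁ := by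
      have hcongr : ∀ i ∈ Ioc 0 m₁, Real.log (1 + lam * Z i)
          = T (lam * Z i) + (Real.log (1 + lam * Z i) - T (lam * Z i)) := fun i _ => by ring
      rw [Finset.sum_congr rfl hcongr, Finset.sum_add_distrib, hE₁]
      congr 1
      rw [hT]
      simp only
      rw [Finset.sum_comm]
      refine Finset.sum_congr rfl fun r hr => ?_
      rw [hU r, hset1, Finset.mul_sum]
      refine Finset.sum_congr rfl fun i hi => ?_
      rw [mul_pow]
      ring
    have hS3 : ∑ i ∈ Ioc (m₂ - 1) n, Real.log (1 + lam * Z i)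
        = ((n:ℝ) - (m₂:ℝ) + 1) * Real.log lam + b
          + (∑ r ∈ Icc 1 s, ((-1 : ℝ) ^ (r - 1) / (r : ℝ)) * (lam ^ r)⁻¹ * V r) + E₂ := by
      have hcongr : ∀ i ∈ Ioc (m₂ - 1) n, Real.log (1 + lam * Z i)
          = (Real.log lam + Real.log (Z i))
            + (T ((lam * Z i)⁻¹) + (Real.log (1 + (lam * Z i)⁻¹) - T ((lam * Z i)⁻¹))) := by
        intro i hi
        have hp := hZpos' i hi
        have hzi := hZipos' i hi
        have hinvpos : (0:ℝ) < 1 + (lam * Z i)⁻¹ := by positivity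
        have h1 : (1 : ℝ) + lam * Z i = (lam * Z i) * (1 + (lam * Z i)⁻¹) := by
          field_simp
          ring
        rw [h1, Real.log_mul (ne_of_gt hp) (ne_of_gt hinvpos),
          Real.log_mul (ne_of_gt hlam) (ne_of_gt hzi)]
        ring
      rw [Finset.sum_congr rfl hcongr, Finset.sum_add_distrib, Finset.sum_add_distrib,
        Finset.sum_add_distrib, hE₂]
      have c1 : ∑ _i ∈ Ioc (m₂ - 1) n, Real.log lam = ((n:ℝ) - (m₂:ℝ) + 1) * Real.log lam := by
        rw [Finset.sum_const, Nat.card_Ioc, nsmul_eq_mul, hcardR]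
      have c2 : ∑ i ∈ Ioc (m₂ - 1) n, Real.log (Z i) = b := by
        rw [hb, hset2]
      have c3 : ∑ i ∈ Ioc (m₂ - 1) n, T ((lam * Z i)⁻¹)
          = ∑ r ∈ Icc 1 s, ((-1 : ℝ) ^ (r - 1) / (r : ℝ)) * (lam ^ r)⁻¹ * V r := by
        rw [hT]
        simp only
        rw [Finset.sum_comm]
        refine Finset.sum_congr rfl fun r hr => ?_
        rw [hV r, hset2, Finset.mul_sum]
        refine Finset.sum_congr rfl fun i hi => ?_
        rw [inv_pow, mul_pow, mul_inv]
        ring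
      rw [c1, c2, c3]
      ring
    have hS2 : ∑ i ∈ Icc (m₁ + 1) (m₂ - 1), Real.log (1 + lam * Z i)
        = ∑ i ∈ Ioc m₁ (m₂ - 1), Real.log (1 + lam * Z i) := by
      rw [← Finset.Icc_add_one_left_eq_Ioc]
    rw [hg, hA, hsplit, hS1, hS3, hS2]
    ring
end

section
/- Let n ∈ ℕ, let U be an n×n complex unitary matrix, let a_1, …, a_n be nonzero complex numbers and ℓ_1, …, ℓ_n nonnegative real numbers, and set A = U·diag(a)·Uᴴ and L = U·diag(ℓ)·Uᴴ, where Uᴴ denotes the conjugate transpose. Let y ∈ ℂⁿ, let λ > 0 be real, and set Z_i = ℓ_i/|a_i|² and ŷ = Uᴴy. Then AᴴA + λL is invertible and yᴴy − (Aᴴy)ᴴ(AᴴA + λL)⁻¹(Aᴴy) = Σ_{i=1}^n |ŷ_i|² · λZ_i/(1 + λZ_i). -/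
open Matrix

/-- In the periodic model, with `A = U diag(a) Uᴴ` and `L = U diag(ℓ) Uᴴ` simultaneously
diagonalized by a unitary `U`, the data-misfit function satisfies
`yᴴy − (Aᴴy)ᴴ(AᴴA + λL)⁻¹(Aᴴy) = Σᵢ |ŷᵢ|² λZᵢ/(1+λZᵢ)` where `Zᵢ = ℓᵢ/|aᵢ|²`, `ŷ = Uᴴy`. -/
theorem f_diagonalized {n : ℕ}
    (U : Matrix (Fin n) (Fin n) ℂ) (hU : U ∈ Matrix.unitaryGroup (Fin n) ℂ)
    (a : Fin n → ℂ) (ha : ∀ i, a i ≠ 0)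
    (ℓ : Fin n → ℝ) (hℓ : ∀ i, 0 ≤ ℓ i)
    (A L : Matrix (Fin n) (Fin n) ℂ)
    (hA : A = U * Matrix.diagonal a * Uᴴ)
    (hL : L = U * Matrix.diagonal (fun i => (ℓ i : ℂ)) * Uᴴ)
    (y : Fin n → ℂ) (lam : ℝ) (hlam : 0 < lam)
    (Z : Fin n → ℝ) (hZ : ∀ i, Z i = ℓ i / ‖a i‖ ^ 2)
    (yhat : Fin n → ℂ) (hyhat : yhat = Uᴴ.mulVec y) :
    IsUnit (Aᴴ * A + (lam : ℂ) • L).det ∧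
    star y ⬝ᵥ y
        - star (Aᴴ.mulVec y) ⬝ᵥ (Aᴴ * A + (lam : ℂ) • L)⁻¹.mulVec (Aᴴ.mulVec y)
      = ((∑ i, ‖yhat i‖ ^ 2 * (lam * Z i) / (1 + lam * Z i) : ℝ) : ℂ) := by
  have hUU : U * Uᴴ = 1 := by
    simpa [Matrix.star_eq_conjTranspose] using hU.2
  have hUU' : Uᴴ * U = 1 := by
    simpa [Matrix.star_eq_conjTranspose] using hU.1
  -- the diagonal entries of AᴴA + λ L in the U-basis
  set d : Fin n → ℂ := fun i => ((‖a i‖) ^ 2 + lam * ℓ i : ℝ) with hd_def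
  have ha2 : ∀ i, (0 : ℝ) < ‖a i‖ ^ 2 := by
    intro i
    have : ‖a i‖ ≠ 0 := by simpa using ha i
    positivity
  have hdpos : ∀ i, (0 : ℝ) < ‖a i‖ ^ 2 + lam * ℓ i := by
    intro i
    have := mul_nonneg hlam.le (hℓ i)
    linarith [ha2 i]
  have hd_ne : ∀ i, d i ≠ 0 := by
    intro i
    simp only [hd_def]
    exact_mod_cast (hdpos i).ne'
  -- Aᴴ in diagonal form
  have hAH : Aᴴ = U * Matrix.diagonal (fun i => star (a i)) * Uᴴ := by
    rw [hA]
    simp [Matrix.conjTranspose_mul, Matrix.diagonal_conjTranspose, Matrix.mul_assoc,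
      Pi.star_def]
  -- the key diagonalization of M := AᴴA + λL
  have hM : Aᴴ * A + (lam : ℂ) • L = U * Matrix.diagonal d * Uᴴ := by
    rw [hAH, hA, hL]
    have h1 : (U * Matrix.diagonal (fun i => star (a i)) * Uᴴ) *
        (U * Matrix.diagonal a * Uᴴ)
        = U * (Matrix.diagonal (fun i => star (a i)) * Matrix.diagonal a) * Uᴴ := by
      simp only [Matrix.mul_assoc]
      rw [show Uᴴ * (U * (Matrix.diagonal a * Uᴴ)) = Matrix.diagonal a * Uᴴ by
        rw [← Matrix.mul_assoc, hUU', Matrix.one_mul]]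
    rw [h1, Matrix.diagonal_mul_diagonal]
    have h2 : (lam : ℂ) • (U * Matrix.diagonal (fun i => (ℓ i : ℂ)) * Uᴴ)
        = U * Matrix.diagonal (fun i => (lam : ℂ) * (ℓ i : ℂ)) * Uᴴ := by
      rw [show (fun i => (lam : ℂ) * (ℓ i : ℂ)) = (lam : ℂ) • (fun i => (ℓ i : ℂ)) from rfl,
        Matrix.diagonal_smul, Matrix.mul_smul, Matrix.smul_mul]
    rw [h2, ← Matrix.add_mul, ← Matrix.mul_add, Matrix.diagonal_add]
    have hfd : (fun i => star (a i) * a i + (lam : ℂ) * (ℓ i : ℂ)) = d := by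
      funext i
      rw [show star (a i) * a i = ((‖a i‖) ^ 2 : ℝ) by
        rw [Complex.star_def, ← Complex.normSq_eq_conj_mul_self, Complex.sq_norm]]
      simp only [hd_def]
      push_cast
      ring
    rw [hfd]
  -- determinant is a unit
  have hdetU : IsUnit U.det := by
    exact IsUnit.of_mul_eq_one Uᴴ.det (by rw [← Matrix.det_mul, hUU, Matrix.det_one])
  have hdetD : IsUnit (Matrix.diagonal d).det := by
    rw [Matrix.det_diagonal]
    exact isUnit_iff_ne_zero.mpr (Finset.prod_ne_zero_iff.mpr fun i _ => hd_ne i)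
  have hdetUH : IsUnit Uᴴ.det := by
    exact IsUnit.of_mul_eq_one U.det (by rw [← Matrix.det_mul, hUU', Matrix.det_one])
  have hdet : IsUnit (Aᴴ * A + (lam : ℂ) • L).det := by
    rw [hM, Matrix.det_mul, Matrix.det_mul]
    exact (hdetU.mul hdetD).mul hdetUH
  refine ⟨hdet, ?_⟩
  -- explicit inverse
  have hMinv : (Aᴴ * A + (lam : ℂ) • L)⁻¹ = U * Matrix.diagonal (fun i => (d i)⁻¹) * Uᴴ := by
    apply Matrix.inv_eq_right_inv
    rw [hM]
    simp only [Matrix.mul_assoc]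
    rw [show Uᴴ * (U * (Matrix.diagonal (fun i => (d i)⁻¹) * Uᴴ))
        = Matrix.diagonal (fun i => (d i)⁻¹) * Uᴴ by
      rw [← Matrix.mul_assoc, hUU', Matrix.one_mul]]
    rw [← Matrix.mul_assoc (Matrix.diagonal d), Matrix.diagonal_mul_diagonal]
    rw [show (fun i => d i * (d i)⁻¹) = fun _ => (1 : ℂ) by
      funext i; exact mul_inv_cancel₀ (hd_ne i)]
    rw [Matrix.diagonal_one, Matrix.one_mul]
    exact hUU
  -- unitary dot product lemma
  have hdot : ∀ v w : Fin n → ℂ, star (U.mulVec v) ⬝ᵥ (U.mulVec w) = star v ⬝ᵥ w := by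
    intro v w
    rw [Matrix.star_mulVec, Matrix.dotProduct_mulVec, Matrix.vecMul_vecMul, hUU',
      Matrix.vecMul_one]
  have hy : y = U.mulVec yhat := by
    rw [hyhat, Matrix.mulVec_mulVec, hUU, Matrix.one_mulVec]
  -- the transformed vector v = diag(star a) ŷ
  set v : Fin n → ℂ := fun i => star (a i) * yhat i with hv_def
  have hAy : Aᴴ.mulVec y = U.mulVec v := by
    rw [hAH, hy, Matrix.mulVec_mulVec, Matrix.mul_assoc, Matrix.mul_assoc, hUU',
      Matrix.mul_one, ← Matrix.mulVec_mulVec]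
    have hdv : (Matrix.diagonal fun i => star (a i)).mulVec yhat = v := by
      funext i
      rw [Matrix.mulVec_diagonal]
    rw [hdv]
  have hMAy : (Aᴴ * A + (lam : ℂ) • L)⁻¹.mulVec (Aᴴ.mulVec y)
      = U.mulVec ((Matrix.diagonal (fun i => (d i)⁻¹)).mulVec v) := by
    rw [hMinv, hAy, Matrix.mulVec_mulVec, Matrix.mul_assoc, Matrix.mul_assoc, hUU',
      Matrix.mul_one, ← Matrix.mulVec_mulVec]
  have hterm1 : star y ⬝ᵥ y = star yhat ⬝ᵥ yhat := by
    conv_lhs => rw [hy]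
    exact hdot yhat yhat
  have hterm2 : star (Aᴴ.mulVec y) ⬝ᵥ (Aᴴ * A + (lam : ℂ) • L)⁻¹.mulVec (Aᴴ.mulVec y)
      = star v ⬝ᵥ (Matrix.diagonal (fun i => (d i)⁻¹)).mulVec v := by
    rw [hMAy, hAy]
    exact hdot v _
  rw [hterm1, hterm2]
  -- now a pure summation computation
  rw [dotProduct, dotProduct, ← Finset.sum_sub_distrib]
  rw [show ((∑ i, ‖yhat i‖ ^ 2 * (lam * Z i) / (1 + lam * Z i) : ℝ) : ℂ)
      = ∑ i, ((‖yhat i‖ ^ 2 * (lam * Z i) / (1 + lam * Z i) : ℝ) : ℂ) by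
    push_cast; rfl]
  refine Finset.sum_congr rfl fun i _ => ?_
  simp only [Matrix.mulVec_diagonal, Pi.star_apply, hv_def]
  have hstarmul : ∀ z : ℂ, star z * z = (‖z‖ ^ 2 : ℝ) := by
    intro z
    rw [Complex.star_def, ← Complex.normSq_eq_conj_mul_self, Complex.sq_norm]
  have hsv : star (star (a i) * yhat i) * (star (a i) * yhat i)
      = ((‖a i‖ ^ 2 * ‖yhat i‖ ^ 2 : ℝ) : ℂ) := by
    have habsmul : ‖star (a i) * yhat i‖ ^ 2
        = ‖a i‖ ^ 2 * ‖yhat i‖ ^ 2 := by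
      rw [norm_mul, mul_pow]
      simp
    rw [hstarmul, habsmul]
  have hreal : ‖yhat i‖ ^ 2
      - (‖a i‖ ^ 2 + lam * ℓ i)⁻¹ * (‖a i‖ ^ 2 * ‖yhat i‖ ^ 2)
      = ‖yhat i‖ ^ 2 * (lam * Z i) / (1 + lam * Z i) := by
    rw [hZ]
    have h1 := (ha2 i).ne'
    have h2 := (hdpos i).ne'
    have h3 : ‖a i‖ ≠ 0 := norm_ne_zero_iff.mpr (ha i)
    field_simp
    ring
  calc star (yhat i) * yhat i - star (star (a i) * yhat i) * ((d i)⁻¹ * (star (a i) * yhat i))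
      = ((‖yhat i‖ ^ 2 : ℝ) : ℂ)
        - ((‖a i‖ ^ 2 + lam * ℓ i : ℝ) : ℂ)⁻¹
          * ((‖a i‖ ^ 2 * ‖yhat i‖ ^ 2 : ℝ) : ℂ) := by
        rw [hstarmul]
        rw [show star (star (a i) * yhat i) * ((d i)⁻¹ * (star (a i) * yhat i))
            = (d i)⁻¹ * (star (star (a i) * yhat i) * (star (a i) * yhat i)) by ring]
        rw [hsv, hd_def]
    _ = ((‖yhat i‖ ^ 2
        - (‖a i‖ ^ 2 + lam * ℓ i)⁻¹
          * (‖a i‖ ^ 2 * ‖yhat i‖ ^ 2) : ℝ) : ℂ) := by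
        push_cast; ring
    _ = ((‖yhat i‖ ^ 2 * (lam * Z i) / (1 + lam * Z i) : ℝ) : ℂ) := by
        rw [hreal]
end

section
/- Let n ∈ ℕ, let f, g : ℝ → ℝ be functions, let α_γ, α_δ, β_γ, β_δ > 0 be real constants, and define h : (0,∞) × (0,∞) → ℝ by h(γ, δ) = δ^{n/2} · exp( −(1/2) g(δ/γ) − (γ/2) f(δ/γ) ) · γ^{α_γ − 1} e^{−β_γ γ} · δ^{α_δ − 1} e^{−β_δ δ}. Fix φ ∈ (0, π/2). Then there exists a constant C > 0 (explicitly, C = (cos φ)^{α_γ − 1} (sin φ)^{n/2 + α_δ − 1} exp(−(1/2) g(tan φ))) such that for every r > 0, r · h(r cos φ, r sin φ) = C · r^{n/2 + α_γ + α_δ − 1} · exp( −r · ( (cos φ / 2) f(tan φ) + β_γ cos φ + β_δ sin φ ) ). In particular, as a function of r this is proportional to the density of the Gamma distribution with shape n/2 + α_γ + α_δ and rate (cos φ / 2) f(tan φ) + β_γ cos φ + β_δ sin φ. -/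
open Real

/-- In polar coordinates `γ = r cos φ`, `δ = r sin φ`, the marginal posterior density
`h(γ,δ) = δ^(n/2) exp(−½g(δ/γ) − (γ/2)f(δ/γ)) γ^(αγ−1)e^(−βγ γ) δ^(αδ−1)e^(−βδ δ)`
times the Jacobian factor `r` is, as a function of `r`, proportional to a Gamma density
with shape `n/2 + αγ + αδ` and rate `(cos φ/2) f(tan φ) + βγ cos φ + βδ sin φ`. -/
theorem polar_gamma_conditional
    (n : ℕ) (f g : ℝ → ℝ) (αγ αδ βγ βδ : ℝ)
    (hαγ : 0 < αγ) (hαδ : 0 < αδ) (hβγ : 0 < βγ) (hβδ : 0 < βδ)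
    (h : ℝ → ℝ → ℝ)
    (hh : ∀ γ δ : ℝ, 0 < γ → 0 < δ →
      h γ δ = δ ^ ((n : ℝ) / 2)
        * Real.exp (-(1/2) * g (δ / γ) - (γ / 2) * f (δ / γ))
        * (γ ^ (αγ - 1) * Real.exp (-βγ * γ))
        * (δ ^ (αδ - 1) * Real.exp (-βδ * δ)))
    (φ : ℝ) (hφ₁ : 0 < φ) (hφ₂ : φ < Real.pi / 2) :
    ∃ C : ℝ, 0 < C ∧
      C = Real.cos φ ^ (αγ - 1) * Real.sin φ ^ ((n : ℝ) / 2 + αδ - 1)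
            * Real.exp (-(1/2) * g (Real.tan φ)) ∧
      ∀ r : ℝ, 0 < r →
        r * h (r * Real.cos φ) (r * Real.sin φ)
          = C * r ^ ((n : ℝ) / 2 + αγ + αδ - 1)
              * Real.exp (-r * ((Real.cos φ / 2) * f (Real.tan φ)
                  + βγ * Real.cos φ + βδ * Real.sin φ)) := by
  have hpi := Real.pi_pos
  have hc : 0 < Real.cos φ :=
    Real.cos_pos_of_mem_Ioo ⟨by linarith, hφ₂⟩
  have hs : 0 < Real.sin φ :=
    Real.sin_pos_of_pos_of_lt_pi hφ₁ (by linarith)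
  refine ⟨_, by positivity, rfl, ?_⟩
  intro r hr
  have ht : (r * Real.sin φ) / (r * Real.cos φ) = Real.tan φ := by
    rw [Real.tan_eq_sin_div_cos]
    field_simp
  rw [hh _ _ (by positivity) (by positivity), ht]
  simp only [Real.mul_rpow hr.le hs.le, Real.mul_rpow hr.le hc.le]
  rw [show (n : ℝ)/2 + αδ - 1 = (n : ℝ)/2 + (αδ - 1) by ring, Real.rpow_add hs]
  rw [show (n : ℝ)/2 + αγ + αδ - 1 = (1 + (n : ℝ)/2) + ((αγ - 1) + (αδ - 1)) by ring,
    Real.rpow_add hr, Real.rpow_add hr, Real.rpow_add hr, Real.rpow_one]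
  have e1 : Real.exp (-(1/2) * g (Real.tan φ) - r * Real.cos φ / 2 * f (Real.tan φ))
      = Real.exp (-(1/2) * g (Real.tan φ))
        * Real.exp (-(r * Real.cos φ / 2 * f (Real.tan φ))) := by
    rw [show -(1/2) * g (Real.tan φ) - r * Real.cos φ / 2 * f (Real.tan φ)
      = (-(1/2) * g (Real.tan φ)) + (-(r * Real.cos φ / 2 * f (Real.tan φ))) by ring,
      Real.exp_add]
  have e2 : Real.exp (-r * ((Real.cos φ / 2) * f (Real.tan φ)
        + βγ * Real.cos φ + βδ * Real.sin φ))
      = Real.exp (-(r * Real.cos φ / 2 * f (Real.tan φ)))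
        * Real.exp (-βγ * (r * Real.cos φ)) * Real.exp (-βδ * (r * Real.sin φ)) := by
    rw [show -r * ((Real.cos φ / 2) * f (Real.tan φ) + βγ * Real.cos φ + βδ * Real.sin φ)
      = (-(r * Real.cos φ / 2 * f (Real.tan φ)) + -βγ * (r * Real.cos φ))
        + -βδ * (r * Real.sin φ) by ring, Real.exp_add, Real.exp_add]
  rw [e1, e2]
  ring
end
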